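/- Let 0 < V₀ < 2 and σ₀ > 0. On a probability space, let (ΔW⁰(k+1))_{k≥0} and (ΔW(k+1))_{k≥0} be two i.i.d. sequences of standard normal random variables, let α(0) be square-integrable with E[α(0)] = 0 and E[α(0)²] = σ₀²/(2V₀−V₀²), and assume that the family {α(0), ΔW⁰(k+1) : k ≥ 0} is independent of the family {ΔW(k+1) : k ≥ 0}. Define α(k+1) = (1−V₀)·α(k) + σ₀·ΔW⁰(k+1). Then the empirical cross term (1/T)·Σ_{k=0}^{T−1} α(k)·ΔW(k+1) converges to 0 almost surely as T → ∞. -/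

import Mathlib

open MeasureTheory ProbabilityTheory Filter
open scoped NNReal ENNReal

section AuxGaussian

lemma aux_gaussian_sq_integrable : Integrable (fun x : ℝ => x ^ 2) (gaussianReal 0 1) := by
  rw [gaussianReal_of_var_ne_zero 0 one_ne_zero,
    integrable_withDensity_iff (measurable_gaussianPDF 0 1)
      (Filter.Eventually.of_forall fun x => ENNReal.ofReal_lt_top)]
  have h2 : Integrable (fun x : ℝ => x ^ 2 * Real.exp (-(1/2) * x ^ 2)) := by
    have h := integrable_rpow_mul_exp_neg_mul_sq (b := 1/2) (by norm_num) (s := 2) (by norm_num)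
    have he : (fun x : ℝ => x ^ (2:ℝ) * Real.exp (-(1/2) * x ^ 2))
        = fun x : ℝ => x ^ 2 * Real.exp (-(1/2) * x ^ 2) := by
      funext x
      rw [show (2:ℝ) = ((2:ℕ):ℝ) by norm_num, Real.rpow_natCast]
    rwa [he] at h
  have heq : (fun x : ℝ => x ^ 2 * (gaussianPDF 0 1 x).toReal)
      = fun x : ℝ => (Real.sqrt (2 * Real.pi))⁻¹ * (x ^ 2 * Real.exp (-(1/2) * x ^ 2)) := by
    funext x
    rw [gaussianPDF, ENNReal.toReal_ofReal (gaussianPDFReal_nonneg _ _ _), gaussianPDFReal]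
    have h1 : -(x - 0) ^ 2 / (2 * ((1:ℝ≥0):ℝ)) = -(1/2) * x ^ 2 := by
      push_cast; ring
    rw [h1]
    push_cast
    ring
  rw [heq]
  exact h2.const_mul _

lemma aux_gaussian_memLp_two : MemLp (id : ℝ → ℝ) 2 (gaussianReal 0 1) :=
  (memLp_two_iff_integrable_sq aestronglyMeasurable_id).2 (by simpa using aux_gaussian_sq_integrable)

lemma aux_gaussian_mean_zero : ∫ x, x ∂(gaussianReal 0 1) = 0 := by
  have hv : (⟨(-1:ℝ)^2, sq_nonneg _⟩ : ℝ≥0) = 1 := by ext; norm_num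
  have hmap : Measure.map (fun x : ℝ => (-1 : ℝ) * x) (gaussianReal 0 1) = gaussianReal 0 1 := by
    rw [gaussianReal_map_const_mul (-1)]
    congr 1
    · simp
    · ext; simp
  have h1 := integral_map (φ := fun x : ℝ => (-1 : ℝ) * x) (f := fun x : ℝ => x)
    (measurable_id.const_mul _).aemeasurable
    (by rw [hmap]; exact aestronglyMeasurable_id)
  rw [hmap, integral_const_mul] at h1
  linarith

lemma aux_integral_sq_le {Ω : Type*} [MeasurableSpace Ω] {μ : Measure Ω} {f : Ω → ℝ}
    (hf : AEStronglyMeasurable f μ) {M : ℝ} (h : (eLpNorm f 2 μ).toReal ≤ M) :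
    ∫ ω, f ω ^ 2 ∂μ ≤ M ^ 2 := by
  have hsm : AEStronglyMeasurable (fun ω => f ω ^ 2) μ := by
    simp only [pow_two]; exact hf.mul hf
  have key : ∫ ω, f ω ^ 2 ∂μ = ((eLpNorm f 2 μ).toReal) ^ 2 := by
    rw [integral_eq_lintegral_of_nonneg_ae (Filter.Eventually.of_forall fun ω => sq_nonneg _) hsm,
      eLpNorm_eq_lintegral_rpow_enorm_toReal two_ne_zero ENNReal.ofNat_ne_top]
    have hpt : ∀ ω, ENNReal.ofReal (f ω ^ 2) = ‖f ω‖ₑ ^ ((2:ℝ≥0∞).toReal) := by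
      intro ω
      rw [show ((2:ℝ≥0∞)).toReal = ((2:ℕ):ℝ) by norm_num, Real.enorm_eq_ofReal_abs,
        ENNReal.rpow_natCast, ← ENNReal.ofReal_pow (abs_nonneg _), sq_abs]
    simp_rw [hpt]
    rw [← ENNReal.toReal_pow]
    congr 1
    rw [← ENNReal.rpow_natCast (_ ^ (1 / (2:ℝ≥0∞).toReal)) 2, ← ENNReal.rpow_mul]
    norm_num
  rw [key]
  exact pow_le_pow_left₀ ENNReal.toReal_nonneg h 2

end AuxGaussian

/-- **Strong consistency: vanishing of the empirical cross term.**
Let `α` be the stationary discrete Markov diffusion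
`α (k+1) = (1-V₀) α k + σ₀ W0 k` driven by an i.i.d. standard normal sequence `W0`,
started from a mean-zero square-integrable initial value with the stationary variance
`σ₀^2/(2V₀ - V₀^2)`, and let `W` be an i.i.d. standard normal sequence such that the
family `{α 0, W0 k : k}` is independent of the family `{W k : k}`. Then the empirical
cross term `(1/T) Σ_{k<T} α k · W k` converges to `0` almost surely as `T → ∞`. -/
theorem empirical_cross_term_vanishes
    {Ω : Type*} [MeasureSpace Ω] (μ : Measure Ω) [IsProbabilityMeasure μ]
    (V₀ σ₀ : ℝ) (hV₀ : 0 < V₀ ∧ V₀ < 2) (hσ₀ : 0 < σ₀)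
    (α : ℕ → Ω → ℝ) (W0 W : ℕ → Ω → ℝ)
    (hα0 : MemLp (α 0) 2 μ)
    (hmean0 : ∫ ω, α 0 ω ∂μ = 0)
    (hvar0 : ∫ ω, (α 0 ω) ^ 2 ∂μ = σ₀ ^ 2 / (2 * V₀ - V₀ ^ 2))
    (hW0iid : iIndepFun W0 μ)
    (hW0dist : ∀ k, Measure.map (W0 k) μ = gaussianReal 0 1)
    (hWiid : iIndepFun W μ)
    (hWdist : ∀ k, Measure.map (W k) μ = gaussianReal 0 1)
    (hIndep : Indep
      (MeasurableSpace.comap (α 0) inferInstance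
        ⊔ ⨆ k, MeasurableSpace.comap (W0 k) inferInstance)
      (⨆ k, MeasurableSpace.comap (W k) inferInstance) μ)
    (hrec : ∀ k, α (k + 1) = fun ω => (1 - V₀) * α k ω + σ₀ * W0 k ω) :
    ∀ᵐ ω ∂μ, Tendsto
      (fun T : ℕ => (1 / (T : ℝ)) * ∑ k ∈ Finset.range T, α k ω * W k ω)
      atTop (nhds 0) := by
  obtain ⟨hV1, hV2⟩ := hV₀
  -- basic measurability
  have hWaem : ∀ k, AEMeasurable (W k) μ := fun k =>
    aemeasurable_of_map_neZero (by rw [hWdist k]; infer_instance)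
  have hW0aem : ∀ k, AEMeasurable (W0 k) μ := fun k =>
    aemeasurable_of_map_neZero (by rw [hW0dist k]; infer_instance)
  -- W and W0 are in L2
  have hWmem : ∀ k, MemLp (W k) 2 μ := by
    intro k
    have h : MemLp (id : ℝ → ℝ) 2 (Measure.map (W k) μ) := by
      rw [hWdist k]; exact aux_gaussian_memLp_two
    exact (memLp_map_measure_iff (by rw [hWdist k]; exact aestronglyMeasurable_id) (hWaem k)).mp h
  have hW0mem : ∀ k, MemLp (W0 k) 2 μ := by
    intro k
    have h : MemLp (id : ℝ → ℝ) 2 (Measure.map (W0 k) μ) := by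
      rw [hW0dist k]; exact aux_gaussian_memLp_two
    exact (memLp_map_measure_iff (by rw [hW0dist k]; exact aestronglyMeasurable_id) (hW0aem k)).mp h
  -- mean and second moment of W
  have hWint0 : ∀ k, ∫ ω, W k ω ∂μ = 0 := by
    intro k
    have h := integral_map (hWaem k) (f := fun x : ℝ => x)
      (by rw [hWdist k]; exact aestronglyMeasurable_id)
    rw [hWdist k] at h
    rw [← h]
    exact aux_gaussian_mean_zero
  set cW := ∫ x, x ^ 2 ∂(gaussianReal 0 1) with hcW
  have hcW0 : 0 ≤ cW := integral_nonneg fun x => sq_nonneg x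
  have hWsq : ∀ k, ∫ ω, W k ω * W k ω ∂μ = cW := by
    intro k
    have h := integral_map (hWaem k) (f := fun x : ℝ => x ^ 2)
      (by rw [hWdist k]; exact ((measurable_id.pow_const 2).aestronglyMeasurable))
    rw [hWdist k] at h
    simp_rw [← pow_two]
    rw [← h]
  -- MemLp of α
  have hαmem : ∀ k, MemLp (α k) 2 μ := by
    intro k
    induction k with
    | zero => exact hα0
    | succ k ih =>
      rw [hrec k]
      exact (ih.const_mul _).add ((hW0mem k).const_mul _)
  -- product of two L² functions is integrable
  have hmul_int : ∀ (f g : Ω → ℝ), MemLp f 2 μ → MemLp g 2 μ →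
      Integrable (fun ω => f ω * g ω) μ := by
    intro f g hf hg
    have h := hg.smul hf (p := 2) (q := 2) (r := 1)
    rw [memLp_one_iff_integrable] at h
    exact h
  -- α k is measurable w.r.t. the σ-algebra A
  have hαA : ∀ k, Measurable[MeasurableSpace.comap (α 0) inferInstance
      ⊔ ⨆ k, MeasurableSpace.comap (W0 k) inferInstance] (α k) := by
    intro k
    induction k with
    | zero => exact Measurable.of_comap_le le_sup_left
    | succ k ih =>
      rw [hrec k]
      exact (ih.const_mul _).add
        ((Measurable.of_comap_le (le_trans (le_iSup (fun k => MeasurableSpace.comap (W0 k) (inferInstance : MeasurableSpace ℝ)) k) le_sup_right)).const_mul _)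
  have hWB : ∀ k, Measurable[⨆ k, MeasurableSpace.comap (W k) inferInstance] (W k) :=
    fun k => Measurable.of_comap_le (le_iSup (fun k => MeasurableSpace.comap (W k) (inferInstance : MeasurableSpace ℝ)) k)
  -- independence of products
  have hIndepMul : ∀ j k, IndepFun (fun ω => α j ω * α k ω) (fun ω => W j ω * W k ω) μ := by
    intro j k
    exact indep_of_indep_of_le_right
      (indep_of_indep_of_le_left hIndep (Measurable.comap_le ((hαA j).mul (hαA k))))
      (Measurable.comap_le ((hWB j).mul (hWB k)))
  -- uniform L² bound on α
  have hW0eLp : ∀ k, eLpNorm (W0 k) 2 μ = eLpNorm (id : ℝ → ℝ) 2 (gaussianReal 0 1) := by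
    intro k
    rw [← hW0dist k]
    exact (eLpNorm_map_measure aestronglyMeasurable_id (hW0aem k)).symm
  set G := (eLpNorm (id : ℝ → ℝ) 2 (gaussianReal 0 1)).toReal with hG
  have hGfin : eLpNorm (id : ℝ → ℝ) 2 (gaussianReal 0 1) ≠ ∞ :=
    aux_gaussian_memLp_two.eLpNorm_ne_top
  have hG0 : 0 ≤ G := ENNReal.toReal_nonneg
  have hαfin : ∀ k, eLpNorm (α k) 2 μ ≠ ∞ := fun k => (hαmem k).eLpNorm_ne_top
  set r := |1 - V₀| with hrdef
  have hr0 : 0 ≤ r := abs_nonneg _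
  have hr1 : r < 1 := abs_lt.2 ⟨by linarith, by linarith⟩
  have hnrec : ∀ k, (eLpNorm (α (k+1)) 2 μ).toReal ≤ r * (eLpNorm (α k) 2 μ).toReal + σ₀ * G := by
    intro k
    have e1 : eLpNorm (fun ω => (1 - V₀) * α k ω) 2 μ
        = ENNReal.ofReal r * eLpNorm (α k) 2 μ := by
      rw [show (fun ω => (1 - V₀) * α k ω) = (1 - V₀) • (α k) from rfl, eLpNorm_const_smul,
        Real.enorm_eq_ofReal_abs]
    have e2 : eLpNorm (fun ω => σ₀ * W0 k ω) 2 μ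
        = ENNReal.ofReal σ₀ * eLpNorm (W0 k) 2 μ := by
      rw [show (fun ω => σ₀ * W0 k ω) = σ₀ • (W0 k) from rfl, eLpNorm_const_smul,
        Real.enorm_eq_ofReal_abs, abs_of_pos hσ₀]
    have h1 : eLpNorm (α (k+1)) 2 μ
        ≤ ENNReal.ofReal r * eLpNorm (α k) 2 μ + ENNReal.ofReal σ₀ * eLpNorm (W0 k) 2 μ := by
      rw [hrec k, ← e1, ← e2]
      exact eLpNorm_add_le ((hαmem k).1.const_mul _) ((hW0mem k).1.const_mul _) one_le_two
    have hfin : ENNReal.ofReal r * eLpNorm (α k) 2 μ + ENNReal.ofReal σ₀ * eLpNorm (W0 k) 2 μ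
        ≠ ∞ := by
      rw [hW0eLp k]
      exact ENNReal.add_ne_top.2 ⟨ENNReal.mul_ne_top ENNReal.ofReal_ne_top (hαfin k),
        ENNReal.mul_ne_top ENNReal.ofReal_ne_top hGfin⟩
    have h2 := ENNReal.toReal_mono hfin h1
    rw [hW0eLp k] at h2
    rw [ENNReal.toReal_add (ENNReal.mul_ne_top ENNReal.ofReal_ne_top (hαfin k))
      (ENNReal.mul_ne_top ENNReal.ofReal_ne_top hGfin), ENNReal.toReal_mul, ENNReal.toReal_mul,
      ENNReal.toReal_ofReal hr0, ENNReal.toReal_ofReal hσ₀.le] at h2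
    exact h2
  set M := max ((eLpNorm (α 0) 2 μ).toReal) (σ₀ * G / (1 - r)) with hMdef
  have hM0 : 0 ≤ M := le_trans ENNReal.toReal_nonneg (le_max_left _ _)
  have hM : ∀ k, (eLpNorm (α k) 2 μ).toReal ≤ M := by
    intro k
    induction k with
    | zero => exact le_max_left _ _
    | succ k ih =>
      have h2 : σ₀ * G ≤ (1 - r) * M := by
        have h3 : σ₀ * G / (1 - r) ≤ M := le_max_right _ _
        rw [div_le_iff₀ (by linarith)] at h3
        linarith
      have h4 : r * (eLpNorm (α k) 2 μ).toReal ≤ r * M :=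
        mul_le_mul_of_nonneg_left ih hr0
      calc (eLpNorm (α (k+1)) 2 μ).toReal ≤ r * (eLpNorm (α k) 2 μ).toReal + σ₀ * G := hnrec k
        _ ≤ r * M + (1 - r) * M := by linarith
        _ = M := by ring
  have hαsq : ∀ k, ∫ ω, α k ω ^ 2 ∂μ ≤ M ^ 2 := fun k =>
    aux_integral_sq_le (hαmem k).1 (hM k)
  -- moment bounds on the cross terms
  set K := M ^ 2 * cW with hKdef
  have hK0 : 0 ≤ K := mul_nonneg (sq_nonneg _) hcW0
  have hXint : ∀ j k, Integrable (fun ω => (α j ω * W j ω) * (α k ω * W k ω)) μ := by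
    intro j k
    have h3 := (hIndepMul j k).integrable_mul (hmul_int _ _ (hαmem j) (hαmem k))
      (hmul_int _ _ (hWmem j) (hWmem k))
    exact h3.congr (Filter.Eventually.of_forall fun ω => by simp only [Pi.mul_apply]; ring)
  have hXsplit : ∀ j k, ∫ ω, (α j ω * W j ω) * (α k ω * W k ω) ∂μ
      = (∫ ω, α j ω * α k ω ∂μ) * (∫ ω, W j ω * W k ω ∂μ) := by
    intro j k
    have h0 : ∫ ω, (α j ω * W j ω) * (α k ω * W k ω) ∂μ
        = ∫ ω, ((fun ω => α j ω * α k ω) * (fun ω => W j ω * W k ω)) ω ∂μ := by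
      apply integral_congr_ae
      exact Filter.Eventually.of_forall fun ω => by simp only [Pi.mul_apply]; ring
    rw [h0]
    exact (hIndepMul j k).integral_mul_eq_mul_integral ((hαmem j).1.mul (hαmem k).1)
      ((hWmem j).1.mul (hWmem k).1)
  have hXoff : ∀ j k, j ≠ k → ∫ ω, (α j ω * W j ω) * (α k ω * W k ω) ∂μ = 0 := by
    intro j k hjk
    rw [hXsplit j k]
    have hW : ∫ ω, W j ω * W k ω ∂μ = 0 := by
      have h := (hWiid.indepFun hjk).integral_mul_eq_mul_integral (hWmem j).1 (hWmem k).1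
      have h' : ∫ ω, W j ω * W k ω ∂μ = (∫ ω, W j ω ∂μ) * ∫ ω, W k ω ∂μ := h
      rw [h', hWint0 j, zero_mul]
    rw [hW, mul_zero]
  have hXdiag : ∀ k, ∫ ω, (α k ω * W k ω) * (α k ω * W k ω) ∂μ ≤ K := by
    intro k
    rw [hXsplit k k, hWsq k]
    have hαk : ∫ ω, α k ω * α k ω ∂μ ≤ M ^ 2 := by
      simp_rw [← pow_two]; exact hαsq k
    have hαk0 : 0 ≤ ∫ ω, α k ω * α k ω ∂μ := by
      apply integral_nonneg; intro ω; exact mul_self_nonneg _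
    exact mul_le_mul_of_nonneg_right hαk hcW0
  -- the main second-moment bound
  have hmom : ∀ m T : ℕ,
      Integrable (fun ω => (∑ k ∈ Finset.Ico m T, α k ω * W k ω) ^ 2) μ ∧
      ∫ ω, (∑ k ∈ Finset.Ico m T, α k ω * W k ω) ^ 2 ∂μ
        ≤ K * ((Finset.Ico m T).card : ℝ) := by
    intro m T
    have hexp : ∀ ω : Ω, (∑ k ∈ Finset.Ico m T, α k ω * W k ω) ^ 2
        = ∑ j ∈ Finset.Ico m T, ∑ k ∈ Finset.Ico m T,
            (α j ω * W j ω) * (α k ω * W k ω) := by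
      intro ω; rw [sq, Finset.sum_mul_sum]
    have hintsum : Integrable
        (fun ω => ∑ j ∈ Finset.Ico m T, ∑ k ∈ Finset.Ico m T,
          (α j ω * W j ω) * (α k ω * W k ω)) μ :=
      integrable_finset_sum _ fun j _ => integrable_finset_sum _ fun k _ => hXint j k
    constructor
    · exact hintsum.congr (Filter.Eventually.of_forall fun ω => (hexp ω).symm)
    · calc ∫ ω, (∑ k ∈ Finset.Ico m T, α k ω * W k ω) ^ 2 ∂μ
          = ∑ j ∈ Finset.Ico m T, ∑ k ∈ Finset.Ico m T,
              ∫ ω, (α j ω * W j ω) * (α k ω * W k ω) ∂μ := by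
            simp_rw [hexp]
            rw [integral_finset_sum _ fun j _ =>
              integrable_finset_sum _ fun k _ => hXint j k]
            exact Finset.sum_congr rfl fun j _ =>
              integral_finset_sum _ fun k _ => hXint j k
        _ ≤ ∑ _j ∈ Finset.Ico m T, K := by
            apply Finset.sum_le_sum
            intro j hj
            rw [Finset.sum_eq_single j
              (fun k _ hkj => hXoff j k (fun h => hkj h.symm))
              (fun h => absurd hj h)]
            exact hXdiag j
        _ = K * ((Finset.Ico m T).card : ℝ) := by
            rw [Finset.sum_const, nsmul_eq_mul, mul_comm]
  -- the auxiliary sequence u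
  set u : ℕ → Ω → ℝ := fun n ω =>
    (((n:ℝ) + 1) ^ 4)⁻¹ * ((∑ k ∈ Finset.Ico 0 ((n+1)^2), α k ω * W k ω) ^ 2
      + ∑ T ∈ Finset.Ico ((n+1)^2) ((n+2)^2),
          (∑ k ∈ Finset.Ico ((n+1)^2) T, α k ω * W k ω) ^ 2) with hudef
  have hu_nonneg : ∀ n ω, 0 ≤ u n ω := by
    intro n ω
    apply mul_nonneg (by positivity)
    exact add_nonneg (sq_nonneg _) (Finset.sum_nonneg fun T _ => sq_nonneg _)
  have hu_int : ∀ n, Integrable (u n) μ := by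
    intro n
    exact (((hmom 0 ((n+1)^2)).1).add
      (integrable_finset_sum _ fun T _ => (hmom ((n+1)^2) T).1)).const_mul _
  have hu_bound : ∀ n, ∫ ω, u n ω ∂μ ≤ 7 * K / ((n:ℝ) + 1) ^ 2 := by
    intro n
    have hm1 : (1:ℝ) ≤ ((n:ℝ) + 1) := le_add_of_nonneg_left (Nat.cast_nonneg n)
    rw [hudef]
    simp only
    rw [integral_const_mul, integral_add (hmom 0 ((n+1)^2)).1
      (integrable_finset_sum _ fun T _ => (hmom ((n+1)^2) T).1),
      integral_finset_sum _ fun T _ => (hmom ((n+1)^2) T).1]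
    have h1 : ∫ ω, (∑ k ∈ Finset.Ico 0 ((n+1)^2), α k ω * W k ω) ^ 2 ∂μ
        ≤ K * ((n:ℝ) + 1) ^ 2 := by
      refine le_trans (hmom 0 ((n+1)^2)).2 ?_
      rw [Nat.card_Ico, Nat.sub_zero]
      apply le_of_eq
      push_cast
      ring
    have h2 : ∑ T ∈ Finset.Ico ((n+1)^2) ((n+2)^2),
        ∫ ω, (∑ k ∈ Finset.Ico ((n+1)^2) T, α k ω * W k ω) ^ 2 ∂μ
        ≤ 6 * K * ((n:ℝ) + 1) ^ 2 := by
      have hcard : ∀ T ∈ Finset.Ico ((n+1)^2) ((n+2)^2),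
          ∫ ω, (∑ k ∈ Finset.Ico ((n+1)^2) T, α k ω * W k ω) ^ 2 ∂μ
          ≤ K * (2 * ((n:ℝ) + 1)) := by
        intro T hT
        refine le_trans (hmom ((n+1)^2) T).2 ?_
        rw [Nat.card_Ico]
        have hTlt : T < (n+2)^2 := (Finset.mem_Ico.1 hT).2
        have hsub : T - (n+1)^2 ≤ 2 * n + 2 := by
          have e1 : (n+2)^2 = n^2+4*n+4 := by ring
          have e2 : (n+1)^2 = n^2+2*n+1 := by ring
          omega
        have : ((T - (n+1)^2 : ℕ) : ℝ) ≤ 2 * ((n:ℝ) + 1) := by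
          calc ((T - (n+1)^2 : ℕ) : ℝ) ≤ ((2 * n + 2 : ℕ) : ℝ) := by exact_mod_cast hsub
            _ = 2 * ((n:ℝ) + 1) := by push_cast; ring
        exact mul_le_mul_of_nonneg_left this hK0
      refine le_trans (Finset.sum_le_sum hcard) ?_
      rw [Finset.sum_const, Nat.card_Ico, nsmul_eq_mul]
      have hcard2 : ((n+2)^2 - (n+1)^2 : ℕ) = 2 * n + 3 := by
        have e1 : (n+2)^2 = n^2+4*n+4 := by ring
        have e2 : (n+1)^2 = n^2+2*n+1 := by ring
        omega
      rw [hcard2]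
      have : ((2 * n + 3 : ℕ) : ℝ) ≤ 3 * ((n:ℝ) + 1) := by push_cast; linarith [Nat.cast_nonneg (α := ℝ) n]
      calc ((2 * n + 3 : ℕ) : ℝ) * (K * (2 * ((n:ℝ) + 1)))
          ≤ 3 * ((n:ℝ) + 1) * (K * (2 * ((n:ℝ) + 1))) := by
            apply mul_le_mul_of_nonneg_right this
            positivity
        _ = 6 * K * ((n:ℝ) + 1) ^ 2 := by ring
    calc (((n:ℝ) + 1) ^ 4)⁻¹ * (∫ ω, (∑ k ∈ Finset.Ico 0 ((n+1)^2), α k ω * W k ω) ^ 2 ∂μ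
          + ∑ T ∈ Finset.Ico ((n+1)^2) ((n+2)^2),
              ∫ ω, (∑ k ∈ Finset.Ico ((n+1)^2) T, α k ω * W k ω) ^ 2 ∂μ)
        ≤ (((n:ℝ) + 1) ^ 4)⁻¹ * (K * ((n:ℝ) + 1) ^ 2 + 6 * K * ((n:ℝ) + 1) ^ 2) := by
          apply mul_le_mul_of_nonneg_left (add_le_add h1 h2) (by positivity)
      _ = 7 * K / ((n:ℝ) + 1) ^ 2 := by
          field_simp
          ring
  -- summability and a.e. convergence of u to 0
  have hsummable : Summable (fun n : ℕ => 7 * K / ((n:ℝ) + 1) ^ 2) := by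
    have h1 : Summable (fun n : ℕ => 1 / ((n:ℝ)) ^ 2) :=
      Real.summable_one_div_nat_pow.2 one_lt_two
    have h2 : Summable (fun n : ℕ => 1 / ((n:ℝ) + 1) ^ 2) := by
      have := (summable_nat_add_iff 1).2 h1
      simpa [Nat.cast_add] using this
    have h3 := h2.mul_left (7 * K)
    simpa [div_eq_mul_inv, mul_assoc, one_div] using h3
  have hae : ∀ᵐ ω ∂μ, Tendsto (fun n => u n ω) atTop (nhds 0) := by
    have haemu : ∀ n, AEMeasurable (fun ω => ENNReal.ofReal (u n ω)) μ := fun n =>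
      ((hu_int n).aestronglyMeasurable.aemeasurable).ennreal_ofReal
    have hlint : ∑' n, ∫⁻ ω, ENNReal.ofReal (u n ω) ∂μ ≠ ∞ := by
      have hle : ∀ n, ∫⁻ ω, ENNReal.ofReal (u n ω) ∂μ
          ≤ ENNReal.ofReal (7 * K / ((n:ℝ) + 1) ^ 2) := by
        intro n
        rw [← ofReal_integral_eq_lintegral_ofReal (hu_int n)
          (Filter.Eventually.of_forall (hu_nonneg n))]
        exact ENNReal.ofReal_le_ofReal (hu_bound n)
      refine ne_top_of_le_ne_top ?_ (ENNReal.tsum_le_tsum hle)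
      rw [← ENNReal.ofReal_tsum_of_nonneg (fun n => by positivity) hsummable]
      exact ENNReal.ofReal_ne_top
    have h1 : ∫⁻ ω, ∑' n, ENNReal.ofReal (u n ω) ∂μ ≠ ∞ := by
      rw [lintegral_tsum haemu]; exact hlint
    have h2 : ∀ᵐ ω ∂μ, ∑' n, ENNReal.ofReal (u n ω) < ∞ :=
      ae_lt_top' (AEMeasurable.ennreal_tsum haemu) h1
    filter_upwards [h2] with ω hω
    have h3 : Tendsto (fun n => ENNReal.ofReal (u n ω)) atTop (nhds 0) :=
      ENNReal.tendsto_atTop_zero_of_tsum_ne_top hω.ne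
    have h4 : Tendsto (fun n => (ENNReal.ofReal (u n ω)).toReal) atTop (nhds 0) := by
      have := (ENNReal.tendsto_toReal (a := 0) (by simp)).comp h3
      exact this
    refine h4.congr fun n => ?_
    exact ENNReal.toReal_ofReal (hu_nonneg n ω)
  -- conclusion
  filter_upwards [hae] with ω hω
  rw [Metric.tendsto_atTop]
  intro ε hε
  obtain ⟨N₀, hN₀⟩ := (Metric.tendsto_atTop.1 hω) ((ε/2)^2) (by positivity)
  refine ⟨(N₀ + 1)^2, fun T hT => ?_⟩
  have hT1 : 1 ≤ T := le_trans (Nat.one_le_iff_ne_zero.2 (pow_ne_zero 2 (Nat.succ_ne_zero N₀))) hT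
  set s := Nat.sqrt T with hs
  have hs1 : N₀ + 1 ≤ s := by
    have h := Nat.sqrt_le_sqrt hT
    rwa [Nat.sqrt_eq'] at h
  set n := s - 1 with hn
  have hn1 : n + 1 = s := by omega
  have hnN : N₀ ≤ n := by omega
  have hsT : s ^ 2 ≤ T := Nat.sqrt_le' T
  have hTs : T < (s + 1) ^ 2 := Nat.lt_succ_sqrt' T
  -- key bound from u
  have hu := hN₀ n hnN
  rw [Real.dist_eq, sub_zero, abs_of_nonneg (hu_nonneg n ω)] at hu
  have hcast : ((n:ℝ) + 1) = (s:ℝ) := by exact_mod_cast congrArg (Nat.cast (R := ℝ)) hn1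
  set a := ∑ k ∈ Finset.Ico 0 (s^2), α k ω * W k ω with ha
  set b := ∑ k ∈ Finset.Ico (s^2) T, α k ω * W k ω with hb
  set gap := ∑ T' ∈ Finset.Ico (s^2) ((s+1)^2),
      (∑ k ∈ Finset.Ico (s^2) T', α k ω * W k ω) ^ 2 with hgap
  have hun : u n ω = (((s:ℝ)) ^ 4)⁻¹ * (a ^ 2 + gap) := by
    rw [hudef]
    simp only
    rw [hcast, hn1, show n + 2 = s + 1 by omega]
  have hs0 : (0:ℝ) < (s:ℝ) := by
    have : 1 ≤ s := by omega
    exact_mod_cast this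
  have hkey : a ^ 2 + gap = ((s:ℝ)) ^ 4 * u n ω := by
    rw [hun]; field_simp
  have hgap_nonneg' : ∀ T' ∈ Finset.Ico (s^2) ((s+1)^2),
      (0:ℝ) ≤ (∑ k ∈ Finset.Ico (s^2) T', α k ω * W k ω) ^ 2 := fun _ _ => sq_nonneg _
  have hb_le_gap : b ^ 2 ≤ gap := by
    rw [hgap, hb]
    exact Finset.single_le_sum hgap_nonneg' (Finset.mem_Ico.2 ⟨hsT, hTs⟩)
  have hgap_nonneg : 0 ≤ gap := Finset.sum_nonneg hgap_nonneg'
  have hsq_bound : ((s:ℝ)) ^ 4 * u n ω < ((ε/2) * (s:ℝ)^2) ^ 2 := by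
    have h5 : ((s:ℝ)) ^ 4 * u n ω < ((s:ℝ)) ^ 4 * (ε/2)^2 := by
      have hs4 : (0:ℝ) < ((s:ℝ)) ^ 4 := by positivity
      exact (mul_lt_mul_iff_right₀ hs4).2 hu
    calc ((s:ℝ)) ^ 4 * u n ω < ((s:ℝ)) ^ 4 * (ε/2)^2 := h5
      _ = ((ε/2) * (s:ℝ)^2) ^ 2 := by ring
  have ha_lt : |a| < (ε/2) * (s:ℝ)^2 := by
    have h6 : a ^ 2 < ((ε/2) * (s:ℝ)^2) ^ 2 := by
      linarith [hkey, hsq_bound, hgap_nonneg]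
    have h7 : |a| ^ 2 < ((ε/2) * (s:ℝ)^2) ^ 2 := by rwa [sq_abs]
    have h8 : (0:ℝ) ≤ (ε/2) * (s:ℝ)^2 := by positivity
    exact (pow_lt_pow_iff_left₀ (abs_nonneg a) h8 two_ne_zero).1 h7
  have hb_lt : |b| < (ε/2) * (s:ℝ)^2 := by
    have h6 : b ^ 2 < ((ε/2) * (s:ℝ)^2) ^ 2 := by
      linarith [hkey, hsq_bound, hb_le_gap, sq_nonneg a]
    have h7 : |b| ^ 2 < ((ε/2) * (s:ℝ)^2) ^ 2 := by rwa [sq_abs]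
    have h8 : (0:ℝ) ≤ (ε/2) * (s:ℝ)^2 := by positivity
    exact (pow_lt_pow_iff_left₀ (abs_nonneg b) h8 two_ne_zero).1 h7
  -- put everything together
  have hsplit : ∑ k ∈ Finset.range T, α k ω * W k ω = a + b := by
    rw [Finset.range_eq_Ico, ← Finset.sum_Ico_consecutive _ (Nat.zero_le (s^2)) hsT]
  have hTpos : (0:ℝ) < (T:ℝ) := by exact_mod_cast hT1
  have hs2T : ((s:ℝ))^2 ≤ (T:ℝ) := by exact_mod_cast hsT
  rw [Real.dist_eq, sub_zero]
  have habs : |1 / (T:ℝ) * ∑ k ∈ Finset.range T, α k ω * W k ω|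
      = |∑ k ∈ Finset.range T, α k ω * W k ω| / (T:ℝ) := by
    rw [abs_mul, abs_of_nonneg (by positivity : (0:ℝ) ≤ 1 / (T:ℝ))]
    rw [one_div, inv_mul_eq_div]
  rw [habs, hsplit]
  have h12 : |a + b| / (T:ℝ) ≤ |a + b| / ((s:ℝ))^2 :=
    div_le_div_of_nonneg_left (abs_nonneg _) (by positivity) hs2T
  have h13 : |a + b| / ((s:ℝ))^2 < ε := by
    rw [div_lt_iff₀ (by positivity)]
    have h9 : |a + b| ≤ |a| + |b| := abs_add_le a b
    linarith [h9, ha_lt, hb_lt]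
  linarith
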